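/- Let P_n be the path graph on vertices v₁, v₂, …, v_n (with v_i adjacent to v_{i+1} for 1 ≤ i ≤ n−1) and let L be its Laplacian. If y ∈ ℝ^n is a nonzero vector with Ly = λy for some real λ, then y_{v₁} ≠ 0. Consequently the path is controllable when the end vertex v₁ is selected as the single leader. -/

import Mathlib

open Matrix

/-- The path graph on `n` vertices `0, 1, …, n−1`, with `i` adjacent to `i+1`. -/
def pathG (n : ℕ) : SimpleGraph (Fin n) where
  Adj i j := (i : ℕ) + 1 = j ∨ (j : ℕ) + 1 = i
  symm := ⟨by intro i j h; tauto⟩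
  loopless := ⟨by intro i h; omega⟩

instance (n : ℕ) : DecidableRel (pathG n).Adj :=
  fun i j => inferInstanceAs (Decidable (_ ∨ _))

/-- Every Laplacian eigenvector of the path graph `P_n` is nonzero at the end vertex
`v₁`; consequently the path is controllable with the end vertex as single leader. -/
theorem stmt_11 (n : ℕ) (hn : 0 < n) (y : Fin n → ℝ) (l : ℝ) (hy : y ≠ 0)
    (h : (pathG n).lapMatrix ℝ *ᵥ y = l • y) :
    y ⟨0, hn⟩ ≠ 0 := by
  intro h0
  apply hy
  have key : ∀ m, ∀ hm : m < n, y ⟨m, hm⟩ = 0 := by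
    intro m
    induction m using Nat.strong_induction_on with
    | _ m ih =>
      intro hm
      match m with
      | 0 => exact h0
      | (k+1) =>
        have hk : k < n := Nat.lt_of_succ_lt hm
        have hyk : y ⟨k, hk⟩ = 0 := ih k (Nat.lt_succ_self k) hk
        -- equation at vertex k
        have heq := congrFun h ⟨k, hk⟩
        rw [SimpleGraph.lapMatrix_mulVec_apply] at heq
        have hS : ∑ u ∈ (pathG n).neighborFinset ⟨k, hk⟩, y u = 0 := by
          have : (↑((pathG n).degree ⟨k, hk⟩) : ℝ) * y ⟨k, hk⟩
              - ∑ u ∈ (pathG n).neighborFinset ⟨k, hk⟩, y u = l * y ⟨k, hk⟩ := heq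
          rw [hyk] at this
          simpa using this
        have hsum : ∑ u ∈ (pathG n).neighborFinset ⟨k, hk⟩, y u = y ⟨k+1, hm⟩ := by
          refine Finset.sum_eq_single (⟨k+1, hm⟩ : Fin n) ?_ ?_
          · intro u hu hne
            rw [SimpleGraph.mem_neighborFinset] at hu
            have hadj : (k : ℕ) + 1 = u ∨ (u : ℕ) + 1 = k := hu
            have hulk : (u : ℕ) < k := by
              rcases hadj with h1 | h2
              · exfalso; apply hne; exact Fin.ext h1.symm
              · omega
            have := ih u (by omega) u.isLt
            simpa using this
          · intro hnmem
            exfalso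
            apply hnmem
            rw [SimpleGraph.mem_neighborFinset]
            exact Or.inl rfl
        rw [hsum] at hS
        exact hS
  funext i
  have := key i.val i.isLt
  simpa using this
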